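/- Let g ∈ H¹(ℝ). The multiplication operator A : H¹(ℝ) → L²(ℝ) defined by (Au)(x) = g(x)u(x) is well-defined and compact. -/

import Mathlib

open MeasureTheory
open scoped ENNReal NNReal

lemma cs_interval {f : ℝ → ℂ} (hf : MemLp f 2 volume) {a b : ℝ} (hab : a ≤ b) :
    ∫ x in a..b, ‖f x‖ ≤ Real.sqrt (b - a) * (eLpNorm f 2 volume).toReal := by
  have hmeas := hf.aestronglyMeasurable
  rw [intervalIntegral.integral_of_le hab]
  have h1 : ∫ x in Set.Ioc a b, ‖f x‖ =
      (∫⁻ x in Set.Ioc a b, ‖f x‖₊).toReal := by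
    rw [integral_eq_lintegral_of_nonneg_ae (Filter.Eventually.of_forall fun x => norm_nonneg _)
      (hmeas.norm.restrict)]
    congr 1
    refine lintegral_congr fun x => ?_
    exact ofReal_norm (f x)
  rw [h1]
  have hconj : Real.HolderConjugate 2 2 := Real.HolderConjugate.two_two
  have h2 : (∫⁻ x in Set.Ioc a b, (‖f x‖₊ : ℝ≥0∞)) ≤
      (ENNReal.ofReal (b - a)) ^ (1/2 : ℝ) * eLpNorm f 2 volume := by
    have := ENNReal.lintegral_mul_le_Lp_mul_Lq (volume.restrict (Set.Ioc a b)) hconj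
      (f := fun _ => 1) (g := fun x => (‖f x‖₊ : ℝ≥0∞)) aemeasurable_const
      (hmeas.restrict.aemeasurable.enorm)
    simp only [Pi.mul_apply, one_mul, ENNReal.one_rpow] at this
    refine this.trans ?_
    rw [lintegral_one, Measure.restrict_apply_univ, Real.volume_Ioc]
    refine mul_le_mul' le_rfl ?_
    rw [eLpNorm_eq_lintegral_rpow_enorm_toReal (by norm_num) (by norm_num)]
    simp only [ENNReal.toReal_ofNat]
    refine ENNReal.rpow_le_rpow ?_ (by norm_num)
    exact setLIntegral_le_lintegral _ _
  calc ((∫⁻ x in Set.Ioc a b, (‖f x‖₊ : ℝ≥0∞)).toReal)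
      ≤ ((ENNReal.ofReal (b - a)) ^ (1/2 : ℝ) * eLpNorm f 2 volume).toReal := by
        apply ENNReal.toReal_mono _ h2
        exact ENNReal.mul_ne_top (by simp [ENNReal.rpow_eq_top_iff]) hf.2.ne
    _ = Real.sqrt (b - a) * (eLpNorm f 2 volume).toReal := by
        rw [ENNReal.toReal_mul, ← ENNReal.toReal_rpow, ENNReal.toReal_ofReal (by linarith),
          Real.sqrt_eq_rpow]

lemma l2_intervalIntegrable {f : ℝ → ℂ} (hf : MemLp f 2 volume) (a b : ℝ) :
    IntervalIntegrable f volume a b := by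
  rw [intervalIntegrable_iff]
  have h := hf.restrict (Set.uIoc a b)
  haveI : IsFiniteMeasure (volume.restrict (Set.uIoc a b)) := by
    constructor
    rw [Measure.restrict_apply_univ, Set.uIoc, Real.volume_Ioc]
    exact ENNReal.ofReal_lt_top
  exact h.integrable one_le_two

lemma holder_bound {u : ℝ → ℂ} (hud : Differentiable ℝ u) (hu' : MemLp (deriv u) 2 volume)
    {a b : ℝ} (hab : a ≤ b) :
    ‖u b - u a‖ ≤ Real.sqrt (b - a) * (eLpNorm (deriv u) 2 volume).toReal := by
  have hftc : ∫ x in a..b, deriv u x = u b - u a :=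
    intervalIntegral.integral_deriv_eq_sub (fun x _ => hud x)
      (l2_intervalIntegrable hu' a b)
  rw [← hftc]
  exact (intervalIntegral.norm_integral_le_integral_norm hab).trans (cs_interval hu' hab)

lemma lintegral_sq_le {f : ℝ → ℂ} {m : ℝ}
    (h : eLpNorm f 2 volume ≤ ENNReal.ofReal m) (s : Set ℝ) :
    ∫⁻ x in s, (‖f x‖₊ : ℝ≥0∞) ^ (2:ℝ) ≤ (ENNReal.ofReal m) ^ (2:ℝ) := by
  calc ∫⁻ x in s, (‖f x‖₊ : ℝ≥0∞) ^ (2:ℝ) ≤ ∫⁻ x, (‖f x‖₊ : ℝ≥0∞) ^ (2:ℝ) :=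
        setLIntegral_le_lintegral _ _
    _ = (eLpNorm f 2 volume) ^ (2:ℝ) := by
        rw [eLpNorm_eq_lintegral_rpow_enorm_toReal (by norm_num) (by norm_num)]
        simp only [ENNReal.toReal_ofNat]
        rw [← ENNReal.rpow_mul]
        norm_num
        rfl
    _ ≤ (ENNReal.ofReal m) ^ (2:ℝ) := ENNReal.rpow_le_rpow h (by norm_num)

lemma sup_bound {u : ℝ → ℂ} (hud : Differentiable ℝ u) (hu : MemLp u 2 volume)
    (hu' : MemLp (deriv u) 2 volume) {m : ℝ} (hm : 0 ≤ m)
    (h2 : eLpNorm u 2 volume ≤ ENNReal.ofReal m)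
    (h2' : eLpNorm (deriv u) 2 volume ≤ ENNReal.ofReal m) (x : ℝ) : ‖u x‖ ≤ 2 * m := by
  have hcont : Continuous u := hud.continuous
  obtain ⟨y, hy, hymin⟩ := isCompact_Icc.exists_isMinOn (Set.nonempty_Icc.2 (by linarith))
    ((hcont.norm).continuousOn (s := Set.Icc x (x+1)))
  have hymin' : ∀ t ∈ Set.Icc x (x+1), ‖u y‖ ≤ ‖u t‖ := fun t ht => hymin ht
  -- ‖u y‖^2 ≤ ∫ t in x..x+1, ‖u t‖^2
  have hI1 : ‖u y‖^2 ≤ ∫ t in x..(x+1), ‖u t‖^2 := by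
    have := intervalIntegral.integral_mono_on (μ := volume) (by linarith : x ≤ x + 1)
      (intervalIntegrable_const (c := ‖u y‖^2))
      ((hcont.norm.pow 2).intervalIntegrable x (x+1))
      (fun t ht => by
        have := hymin' t ht
        exact pow_le_pow_left₀ (norm_nonneg _) this 2)
    simpa using this
  -- ∫ t in x..x+1, ‖u t‖^2 ≤ m^2
  have hI2 : ∫ t in x..(x+1), ‖u t‖^2 ≤ m^2 := by
    rw [intervalIntegral.integral_of_le (by linarith)]
    have heq : ∫ t in Set.Ioc x (x+1), ‖u t‖^2 =
        (∫⁻ t in Set.Ioc x (x+1), (‖u t‖₊ : ℝ≥0∞) ^ (2:ℝ)).toReal := by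
      rw [integral_eq_lintegral_of_nonneg_ae
        (Filter.Eventually.of_forall fun t => sq_nonneg _)
        (((hcont.norm.pow 2).aestronglyMeasurable).restrict)]
      congr 1
      refine lintegral_congr fun t => ?_
      rw [ENNReal.ofReal_pow (norm_nonneg _), ofReal_norm,
        ← ENNReal.rpow_natCast]
      norm_num
      rfl
    rw [heq]
    have := ENNReal.toReal_mono (b := (ENNReal.ofReal m) ^ (2:ℝ))
      (by simp [ENNReal.rpow_eq_top_iff]) (lintegral_sq_le h2 (Set.Ioc x (x+1)))
    refine this.trans (le_of_eq ?_)
    rw [show ((2:ℝ)) = ((2:ℕ):ℝ) by norm_num, ENNReal.rpow_natCast,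
      ← ENNReal.ofReal_pow hm, ENNReal.toReal_ofReal (pow_nonneg hm 2)]
  have huy : ‖u y‖ ≤ m := by nlinarith [norm_nonneg (u y), hI1.trans hI2]
  have hdiff : ‖u x - u y‖ ≤ m := by
    rw [norm_sub_rev]
    refine (holder_bound hud hu' hy.1).trans ?_
    obtain ⟨hy1, hy2⟩ := hy
    have hs : Real.sqrt (y - x) ≤ 1 := by
      rw [show (1:ℝ) = Real.sqrt 1 by simp]
      exact Real.sqrt_le_sqrt (by linarith)
    have hN : (eLpNorm (deriv u) 2 volume).toReal ≤ m :=
      ENNReal.toReal_le_of_le_ofReal hm h2'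
    calc Real.sqrt (y - x) * (eLpNorm (deriv u) 2 volume).toReal ≤ 1 * m := by
          apply mul_le_mul hs hN ENNReal.toReal_nonneg one_pos.le
      _ = m := one_mul m
  calc ‖u x‖ = ‖u y + (u x - u y)‖ := by ring_nf
    _ ≤ ‖u y‖ + ‖u x - u y‖ := norm_add_le _ _
    _ ≤ m + m := add_le_add huy hdiff
    _ = 2 * m := by ring

lemma tail_small {g : ℝ → ℂ} (hg : MemLp g 2 volume) {δ : ℝ} (hδ : 0 < δ) :
    ∃ R : ℝ, 1 ≤ R ∧
      eLpNorm (((Set.Ico (-R) R)ᶜ).indicator g) 2 volume ≤ ENNReal.ofReal δ := by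
  set ν : Measure ℝ := volume.withDensity (fun x => (‖g x‖₊ : ℝ≥0∞) ^ (2:ℝ)) with hν
  set A : ℕ → Set ℝ := fun n => (Set.Icc (-(n:ℝ)) n)ᶜ with hA
  have hAm : ∀ n, MeasurableSet (A n) := fun n => measurableSet_Icc.compl
  have htot : (∫⁻ x, (‖g x‖₊ : ℝ≥0∞) ^ (2:ℝ)) < ∞ := by
    have := lintegral_rpow_enorm_lt_top_of_eLpNorm_lt_top (f := g) (p := 2)
      (by norm_num) (by norm_num) hg.2
    simpa [enorm_eq_nnnorm] using this
  have hνA : ∀ n, ν (A n) = ∫⁻ x in A n, (‖g x‖₊ : ℝ≥0∞) ^ (2:ℝ) := fun n =>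
    withDensity_apply _ (hAm n)
  have hanti : Antitone A := fun n m hnm => Set.compl_subset_compl.2
    (Set.Icc_subset_Icc (by exact_mod_cast neg_le_neg (Nat.cast_le.2 hnm)) (Nat.cast_le.2 hnm))
  have hiInter : ⋂ n, A n = ∅ := by
    ext x
    simp only [Set.mem_iInter, Set.mem_empty_iff_false, iff_false, not_forall, not_not]
    obtain ⟨n, hn⟩ := exists_nat_ge |x|
    exact ⟨n, by simp [A, Set.mem_Icc, abs_le.1 hn]⟩
  have htend : Filter.Tendsto (ν ∘ A) Filter.atTop (nhds 0) := by
    have := tendsto_measure_iInter_atTop (μ := ν) (s := A)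
      (fun n => (hAm n).nullMeasurableSet) hanti
      ⟨0, by rw [hνA 0]; exact ((setLIntegral_le_lintegral _ _).trans_lt htot).ne⟩
    rwa [hiInter, measure_empty] at this
  have hpos : (0:ℝ≥0∞) < ENNReal.ofReal δ ^ (2:ℝ) :=
    ENNReal.rpow_pos (ENNReal.ofReal_pos.2 hδ) (by simp)
  obtain ⟨n, hn⟩ := (htend.eventually (gt_mem_nhds hpos)).exists
  refine ⟨(n:ℝ) + 1, by linarith [Nat.cast_nonneg (α := ℝ) n], ?_⟩
  have hsub : (Set.Ico (-((n:ℝ)+1)) ((n:ℝ)+1))ᶜ ⊆ A n := by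
    intro x hx
    simp only [Set.mem_compl_iff, Set.mem_Ico, not_and_or, not_le, not_lt] at hx ⊢
    simp only [A, Set.mem_compl_iff, Set.mem_Icc, not_and_or, not_le]
    rcases hx with h | h
    · left; linarith
    · right; linarith
  rw [eLpNorm_indicator_eq_eLpNorm_restrict measurableSet_Ico.compl,
    eLpNorm_eq_lintegral_rpow_enorm_toReal (by norm_num) (by norm_num)]
  simp only [ENNReal.toReal_ofNat]
  have hle : (∫⁻ x in (Set.Ico (-((n:ℝ)+1)) ((n:ℝ)+1))ᶜ, (‖g x‖₊ : ℝ≥0∞) ^ (2:ℝ)) ≤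
      ENNReal.ofReal δ ^ (2:ℝ) := by
    refine le_trans (lintegral_mono_set hsub) ?_
    rw [← hνA n]
    exact hn.le
  calc (∫⁻ x in (Set.Ico (-((n:ℝ)+1)) ((n:ℝ)+1))ᶜ, (‖g x‖₊ : ℝ≥0∞) ^ (2:ℝ)) ^ (1/2:ℝ)
      ≤ (ENNReal.ofReal δ ^ (2:ℝ)) ^ (1/2:ℝ) := ENNReal.rpow_le_rpow hle (by norm_num)
    _ = ENNReal.ofReal δ := by rw [← ENNReal.rpow_mul]; norm_num
set_option maxHeartbeats 1000000 in
theorem multiplication_operator_compact (g : ℝ → ℂ)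
    (hgd : Differentiable ℝ g) (hg : MemLp g 2 volume) (hg' : MemLp (deriv g) 2 volume)
    (V : Set (ℝ → ℂ)) (M : ℝ)
    (hV : ∀ u ∈ V, Differentiable ℝ u ∧ MemLp u 2 volume ∧ MemLp (deriv u) 2 volume ∧
      eLpNorm u 2 volume ≤ ENNReal.ofReal M ∧ eLpNorm (deriv u) 2 volume ≤ ENNReal.ofReal M) :
    (∀ u ∈ V, MemLp (fun x => g x * u x) 2 volume) ∧
    ∀ ε : ℝ, 0 < ε → ∃ F : Finset (ℝ → ℂ), ∀ u ∈ V, ∃ f ∈ F,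
      eLpNorm (fun x => g x * u x - f x) 2 volume ≤ ENNReal.ofReal ε := by
  classical
  set m : ℝ := max M 0 with hm_def
  have hm : 0 ≤ m := le_max_right _ _
  have hVm : ∀ u ∈ V, eLpNorm u 2 volume ≤ ENNReal.ofReal m ∧
      eLpNorm (deriv u) 2 volume ≤ ENNReal.ofReal m := by
    intro u hu
    obtain ⟨_, _, _, h4, h5⟩ := hV u hu
    exact ⟨h4.trans (ENNReal.ofReal_le_ofReal (le_max_left _ _)),
      h5.trans (ENNReal.ofReal_le_ofReal (le_max_left _ _))⟩
  have hsup : ∀ u ∈ V, ∀ x, ‖u x‖ ≤ 2 * m := by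
    intro u hu x
    obtain ⟨h1, h2, h3, _, _⟩ := hV u hu
    obtain ⟨h4, h5⟩ := hVm u hu
    exact sup_bound h1 h2 h3 hm h4 h5 x
  have hpart1 : ∀ u ∈ V, MemLp (fun x => g x * u x) 2 volume := by
    intro u hu
    refine MemLp.of_le_mul (c := 2 * m) hg
      (hg.aestronglyMeasurable.mul ((hV u hu).1.continuous.aestronglyMeasurable)) ?_
    filter_upwards with x
    rw [norm_mul, mul_comm (2*m) ‖g x‖]
    exact mul_le_mul_of_nonneg_left (hsup u hu x) (norm_nonneg _)
  refine ⟨hpart1, ?_⟩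
  intro ε hε
  -- constants
  set Gr : ℝ := (eLpNorm g 2 volume).toReal with hGr_def
  have hGr : 0 ≤ Gr := ENNReal.toReal_nonneg
  set η : ℝ := ε / (2 * (Gr + 1)) with hη_def
  have hη : 0 < η := by positivity
  set δg : ℝ := ε / (2 * (2 * m + 1)) with hδg_def
  have hδg : 0 < δg := by positivity
  obtain ⟨R, hR1, hRtail⟩ := tail_small hg hδg
  have hR0 : 0 < R := lt_of_lt_of_le one_pos hR1
  set hmax : ℝ := (η / (2 * (m + 1)))^2 with hmax_def
  have hmaxpos : 0 < hmax := by positivity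
  set n : ℕ := max 1 ⌈(2 * R) / hmax⌉₊ with hn_def
  have hn : 0 < n := lt_of_lt_of_le one_pos (le_max_left _ _)
  have hnR : (0:ℝ) < n := Nat.cast_pos.2 hn
  set h : ℝ := 2 * R / n with hh_def
  have hhpos : 0 < h := by positivity
  have hhle : h ≤ hmax := by
    rw [hh_def, div_le_iff₀ hnR]
    calc 2 * R = (2 * R) / hmax * hmax := by field_simp
      _ ≤ (⌈(2 * R) / hmax⌉₊ : ℝ) * hmax := by
          exact mul_le_mul_of_nonneg_right (Nat.le_ceil _) hmaxpos.le
      _ ≤ (n:ℝ) * hmax := by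
          refine mul_le_mul_of_nonneg_right ?_ hmaxpos.le
          exact_mod_cast le_max_right 1 ⌈(2 * R) / hmax⌉₊
      _ = hmax * (n:ℝ) := mul_comm _ _
  -- finite net for the ball of radius 2m in ℂ
  obtain ⟨t, htfin, htcov⟩ := (Metric.totallyBounded_iff.mp
    (isCompact_closedBall (0:ℂ) (2*m)).totallyBounded) (η/2) (by positivity)
  -- index function
  have hidx : ∀ k : ℕ, min k (n-1) < n := fun k =>
    lt_of_le_of_lt (min_le_right _ _) (Nat.sub_lt hn one_pos)
  set w : (Fin n → ℂ) → ℝ → ℂ :=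
    fun v y => v ⟨min ⌊(y + R)/h⌋₊ (n-1), hidx _⟩ with hw_def
  have hwm : ∀ v : Fin n → ℂ, Measurable (w v) := by
    intro v
    have : w v = (fun k : ℕ => v ⟨min k (n-1), hidx _⟩) ∘ (fun y => ⌊(y + R)/h⌋₊) := rfl
    rw [this]
    exact measurable_from_top.comp ((measurable_id.add_const R).div_const h).nat_floor
  set F : Finset (ℝ → ℂ) := (Fintype.piFinset (fun _ : Fin n => htfin.toFinset)).image
    (fun v => (Set.Ico (-R) R).indicator (fun y => g y * w v y)) with hF_def
  refine ⟨F, ?_⟩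
  intro u hu
  obtain ⟨hud, huL2, hud2, _, _⟩ := hV u hu
  obtain ⟨hu2m, hu2m'⟩ := hVm u hu
  have hcont : Continuous u := hud.continuous
  -- choose net points for grid values
  have hvi : ∀ i : Fin n, ∃ c, c ∈ t ∧ dist (u (-R + (i:ℕ) * h)) c < η/2 := by
    intro i
    have hmem : u (-R + (i:ℕ) * h) ∈ Metric.closedBall (0:ℂ) (2*m) := by
      rw [Metric.mem_closedBall, dist_zero_right]
      exact hsup u hu _
    have := htcov hmem
    simp only [Set.mem_iUnion, Metric.mem_ball, exists_prop] at this
    exact this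
  choose v hv1 hv2 using hvi
  set f : ℝ → ℂ := (Set.Ico (-R) R).indicator (fun y => g y * w v y) with hf_def
  have hfF : f ∈ F := by
    rw [hF_def, Finset.mem_image]
    exact ⟨v, Fintype.mem_piFinset.2 (fun i => htfin.mem_toFinset.2 (hv1 i)), rfl⟩
  refine ⟨f, hfF, ?_⟩
  -- the key pointwise estimate on the core
  have hkey : ∀ y ∈ Set.Ico (-R) R, ‖u y - w v y‖ ≤ η := by
    intro y hy
    obtain ⟨hy1, hy2⟩ := hy
    set k : ℕ := ⌊(y + R)/h⌋₊ with hk_def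
    have hy0 : 0 ≤ (y + R)/h := div_nonneg (by linarith) hhpos.le
    have hklow : (k:ℝ) * h ≤ y + R := by
      rw [← le_div_iff₀ hhpos]
      exact Nat.floor_le hy0
    have hkup : y + R < ((k:ℝ) + 1) * h := by
      rw [← div_lt_iff₀ hhpos]
      exact Nat.lt_floor_add_one _
    have hkn : k < n := by
      rw [hk_def]
      rw [Nat.floor_lt hy0]
      rw [div_lt_iff₀ hhpos, hh_def]
      have : (n:ℝ) * (2 * R / n) = 2 * R := by field_simp
      rw [this]
      linarith
    have hmin : min k (n-1) = k := Nat.min_eq_left (Nat.le_sub_one_of_lt hkn)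
    have hwy : w v y = v ⟨k, hkn⟩ := by
      rw [hw_def]
      exact congrArg v (Fin.ext (by rw [← hk_def]; exact hmin))
    set xi : ℝ := -R + (k:ℝ) * h with hxi_def
    have hx1 : xi ≤ y := by rw [hxi_def]; linarith
    have hx2 : y - xi ≤ h := by rw [hxi_def]; nlinarith
    have hd1 : ‖u y - u xi‖ ≤ η / 2 := by
      refine (holder_bound hud hud2 hx1).trans ?_
      have hNu' : (eLpNorm (deriv u) 2 volume).toReal ≤ m :=
        ENNReal.toReal_le_of_le_ofReal hm hu2m'
      have hs : Real.sqrt (y - xi) ≤ η / (2 * (m + 1)) := by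
        rw [show η / (2 * (m + 1)) = Real.sqrt hmax by
          rw [hmax_def, Real.sqrt_sq (by positivity)]]
        exact Real.sqrt_le_sqrt (hx2.trans hhle)
      calc Real.sqrt (y - xi) * (eLpNorm (deriv u) 2 volume).toReal
          ≤ (η / (2 * (m + 1))) * m := by
            exact mul_le_mul hs hNu' ENNReal.toReal_nonneg (by positivity)
        _ ≤ η / 2 := by
            rw [div_mul_eq_mul_div, div_le_div_iff₀ (by positivity) (by norm_num)]
            nlinarith
    have hd2 : ‖u xi - v ⟨k, hkn⟩‖ ≤ η / 2 := by
      have := hv2 ⟨k, hkn⟩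
      rw [dist_eq_norm] at this
      exact le_of_lt (by simpa [hxi_def] using this)
    calc ‖u y - w v y‖ = ‖(u y - u xi) + (u xi - v ⟨k, hkn⟩)‖ := by rw [hwy]; ring_nf
      _ ≤ ‖u y - u xi‖ + ‖u xi - v ⟨k, hkn⟩‖ := norm_add_le _ _
      _ ≤ η / 2 + η / 2 := add_le_add hd1 hd2
      _ = η := by ring
  -- decomposition
  set F1 : ℝ → ℂ := ((Set.Ico (-R) R)ᶜ).indicator (fun y => g y * u y) with hF1_def
  set F2 : ℝ → ℂ := (Set.Ico (-R) R).indicator (fun y => g y * (u y - w v y)) with hF2_def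
  have hdecomp : (fun x => g x * u x - f x) = F1 + F2 := by
    funext x
    by_cases hx : x ∈ Set.Ico (-R) R
    · simp only [Pi.add_apply, hF1_def, hF2_def, hf_def,
        Set.indicator_of_mem hx, Set.indicator_of_notMem (Set.notMem_compl_iff.2 hx)]
      ring
    · simp only [Pi.add_apply, hF1_def, hF2_def, hf_def,
        Set.indicator_of_notMem hx, Set.indicator_of_mem (Set.mem_compl hx)]
      ring
  have hF1m : AEStronglyMeasurable F1 volume :=
    (hg.aestronglyMeasurable.mul hcont.aestronglyMeasurable).indicator
      measurableSet_Ico.compl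
  have hF2m : AEStronglyMeasurable F2 volume :=
    (hg.aestronglyMeasurable.mul
      (hcont.aestronglyMeasurable.sub (hwm v).aestronglyMeasurable)).indicator
      measurableSet_Ico
  -- bound F1
  have hbound1 : eLpNorm F1 2 volume ≤ ENNReal.ofReal (ε/2) := by
    have hptw : ∀ᵐ x ∂(volume : Measure ℝ),
        ‖F1 x‖₊ ≤ (2*m).toNNReal * ‖((Set.Ico (-R) R)ᶜ).indicator g x‖₊ := by
      filter_upwards with x
      rw [← NNReal.coe_le_coe]
      push_cast
      rw [Real.coe_toNNReal _ (by positivity)]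
      by_cases hx : x ∈ (Set.Ico (-R) R)ᶜ
      · rw [hF1_def, Set.indicator_of_mem hx, Set.indicator_of_mem hx, norm_mul,
          mul_comm (2*m) ‖g x‖]
        exact mul_le_mul_of_nonneg_left (hsup u hu x) (norm_nonneg _)
      · rw [hF1_def, Set.indicator_of_notMem hx, Set.indicator_of_notMem hx]
        simp
    have := eLpNorm_le_nnreal_smul_eLpNorm_of_ae_le_mul hptw 2
    refine this.trans ?_
    rw [ENNReal.smul_def, smul_eq_mul]
    calc ((2*m).toNNReal : ℝ≥0∞) * eLpNorm (((Set.Ico (-R) R)ᶜ).indicator g) 2 volume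
        ≤ ENNReal.ofReal (2*m) * ENNReal.ofReal δg := by
          refine mul_le_mul' (le_of_eq ?_) hRtail
          rw [ENNReal.ofReal]
      _ = ENNReal.ofReal (2*m*δg) := (ENNReal.ofReal_mul (by positivity)).symm
      _ ≤ ENNReal.ofReal (ε/2) := by
          refine ENNReal.ofReal_le_ofReal ?_
          rw [← mul_div_assoc, div_le_div_iff₀ (by positivity) (by norm_num)]
          nlinarith
  -- bound F2
  have hbound2 : eLpNorm F2 2 volume ≤ ENNReal.ofReal (ε/2) := by
    have hptw : ∀ᵐ x ∂(volume : Measure ℝ), ‖F2 x‖₊ ≤ η.toNNReal * ‖g x‖₊ := by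
      filter_upwards with x
      rw [← NNReal.coe_le_coe]
      push_cast
      rw [Real.coe_toNNReal _ hη.le]
      by_cases hx : x ∈ Set.Ico (-R) R
      · rw [hF2_def, Set.indicator_of_mem hx, norm_mul, mul_comm η ‖g x‖]
        exact mul_le_mul_of_nonneg_left (hkey x hx) (norm_nonneg _)
      · rw [hF2_def, Set.indicator_of_notMem hx]
        simp
        positivity
    have := eLpNorm_le_nnreal_smul_eLpNorm_of_ae_le_mul hptw 2
    refine this.trans ?_
    rw [ENNReal.smul_def, smul_eq_mul]
    calc (η.toNNReal : ℝ≥0∞) * eLpNorm g 2 volume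
        = ENNReal.ofReal η * ENNReal.ofReal Gr := by
          rw [ENNReal.ofReal, hGr_def, ENNReal.ofReal_toReal hg.2.ne]
      _ = ENNReal.ofReal (η * Gr) := (ENNReal.ofReal_mul hη.le).symm
      _ ≤ ENNReal.ofReal (ε/2) := by
          refine ENNReal.ofReal_le_ofReal ?_
          rw [div_mul_eq_mul_div, div_le_div_iff₀ (by positivity) (by norm_num)]
          nlinarith
  rw [hdecomp]
  calc eLpNorm (F1 + F2) 2 volume ≤ eLpNorm F1 2 volume + eLpNorm F2 2 volume :=
      eLpNorm_add_le hF1m hF2m one_le_two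
    _ ≤ ENNReal.ofReal (ε/2) + ENNReal.ofReal (ε/2) := add_le_add hbound1 hbound2
    _ = ENNReal.ofReal ε := by
        rw [← ENNReal.ofReal_add (by positivity) (by positivity)]
        norm_num
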